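/- There exists c₀ > 0 such that for every c ≥ c₀ there is a constant C with (1/n)·Σ_{m > M(n)} ϱ(m/n) ≤ C/n for all n ≥ 3, where M(n) := c·n·(log n)/(log log 3n), the sum being over integers m. -/

import Mathlib

open MeasureTheory Filter Finset

/-- `M n = c·n·(log n)/(log log 3n)`. -/
noncomputable def Mfun (c : ℝ) (n : ℕ) : ℝ :=
  c * n * Real.log n / Real.log (Real.log (3 * n))

open intervalIntegral in
lemma dickman_intg (ϱ : ℝ → ℝ) (hϱcont : ContinuousOn ϱ (Set.Ici 0))
    (hϱinit : ∀ u : ℝ, 0 ≤ u → u ≤ 1 → ϱ u = 1)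
    (hϱeq : ∀ u : ℝ, 1 < u → HasDerivAt ϱ (-ϱ (u - 1) / u) u)
    {u : ℝ} (hu : 1 ≤ u) : u * ϱ u = ∫ t in (u-1)..u, ϱ t := by
  have hInt : ∀ a b : ℝ, 0 ≤ a → 0 ≤ b → IntervalIntegrable ϱ volume a b := by
    intro a b ha hb
    apply (hϱcont.mono ?_).intervalIntegrable
    intro t ht
    rw [Set.mem_uIcc] at ht
    rcases ht with ⟨h1, _⟩ | ⟨h1, _⟩ <;> exact le_trans (by assumption) h1
  set F : ℝ → ℝ := fun x => ∫ t in (0:ℝ)..x, ϱ t with hFdef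
  have hF : ∀ x : ℝ, 0 < x → HasDerivAt F (ϱ x) x := by
    intro x hx
    apply intervalIntegral.integral_hasDerivAt_right (hInt 0 x le_rfl hx.le)
    · exact ⟨Set.Ici 0, Ici_mem_nhds hx, hϱcont.aestronglyMeasurable measurableSet_Ici⟩
    · exact hϱcont.continuousAt (Ici_mem_nhds hx)
  set G : ℝ → ℝ := fun x => x * ϱ x - F x + F (x - 1) with hGdef
  have hG : ∀ x : ℝ, 1 < x → HasDerivAt G 0 x := by
    intro x hx
    have hx0 : (0:ℝ) < x := by linarith
    have h1 : HasDerivAt (fun y : ℝ => y * ϱ y) (1 * ϱ x + x * (-ϱ (x - 1) / x)) x :=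
      (hasDerivAt_id x).mul (hϱeq x hx)
    have h3 : HasDerivAt (fun y : ℝ => F (y - 1)) (ϱ (x - 1) * 1) x :=
      by have := (hF (x - 1) (by linarith)).comp x ((hasDerivAt_id x).sub_const 1); exact this
    have := (h1.sub (hF x hx0)).add h3
    have e : 1 * ϱ x + x * (-ϱ (x - 1) / x) - ϱ x + ϱ (x - 1) * 1 = 0 := by
      rw [mul_div_assoc', mul_comm x, mul_div_assoc, div_self hx0.ne', mul_one]
      ring
    rw [e] at this
    exact this
  have hF0 : F 0 = 0 := intervalIntegral.integral_same
  have hF1 : F 1 = 1 := by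
    have : ∀ t ∈ Set.uIcc (0:ℝ) 1, ϱ t = (fun _ => (1:ℝ)) t := by
      intro t ht
      rw [Set.uIcc_of_le (by norm_num)] at ht
      exact hϱinit t ht.1 ht.2
    rw [hFdef]
    simp only
    rw [intervalIntegral.integral_congr this]
    simp
  have hG1 : G 1 = 0 := by
    simp [hGdef, hF1, hF0, hϱinit 1 (by norm_num) le_rfl]
  have hGu : G u = 0 := by
    rcases eq_or_lt_of_le hu with h | h
    · rw [← h]; exact hG1
    · have hcontF : ContinuousOn F (Set.Icc 0 u) := by
        have huIcc : Set.uIcc (0:ℝ) u = Set.Icc 0 u := Set.uIcc_of_le (by linarith)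
        rw [← huIcc]
        apply intervalIntegral.continuousOn_primitive_interval
        rw [huIcc]
        exact (hϱcont.mono (fun t ht => ht.1)).integrableOn_Icc
      have hcontG : ContinuousOn G (Set.Icc 1 u) := by
        apply ContinuousOn.add
        · apply ContinuousOn.sub
          · exact continuousOn_id.mul (hϱcont.mono (fun t ht => le_trans (by norm_num) ht.1))
          · exact hcontF.mono (fun t ht => ⟨by linarith [ht.1], ht.2⟩)
        · apply hcontF.comp (continuous_id.sub continuous_const).continuousOn
          intro t ht
          simp only [Set.mem_Icc] at ht ⊢
          constructor <;> simp only [Pi.sub_apply, id] <;> [linarith [ht.1]; linarith [ht.2]]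
      obtain ⟨c, hc, hc0⟩ := exists_hasDerivAt_eq_slope G (fun _ => 0) h hcontG
        (fun x hx => hG x hx.1)
      have h0 : (G u - G 1) / (u - 1) = 0 := by simpa using hc0.symm
      have : G u - G 1 = 0 := by
        rcases div_eq_zero_iff.mp h0 with h' | h'
        · exact h'
        · linarith
      linarith [hG1]
  have hsplit : F (u-1) + (∫ t in (u-1)..u, ϱ t) = F u :=
    intervalIntegral.integral_add_adjacent_intervals (hInt 0 (u-1) le_rfl (by linarith))
      (hInt (u-1) u (by linarith) (by linarith))
  have hGu' : u * ϱ u - F u + F (u - 1) = 0 := hGu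
  linarith

lemma dickman_hInt (ϱ : ℝ → ℝ) (hϱcont : ContinuousOn ϱ (Set.Ici 0))
    {a b : ℝ} (ha : 0 ≤ a) (hb : 0 ≤ b) : IntervalIntegrable ϱ volume a b := by
  apply (hϱcont.mono ?_).intervalIntegrable
  intro t ht
  rw [Set.mem_uIcc] at ht
  rcases ht with ⟨h1, _⟩ | ⟨h1, _⟩ <;> exact le_trans (by assumption) h1

lemma dickman_pos (ϱ : ℝ → ℝ) (hϱcont : ContinuousOn ϱ (Set.Ici 0))
    (hϱinit : ∀ u : ℝ, 0 ≤ u → u ≤ 1 → ϱ u = 1)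
    (hϱeq : ∀ u : ℝ, 1 < u → HasDerivAt ϱ (-ϱ (u - 1) / u) u)
    {u : ℝ} (hu : 0 ≤ u) : 0 < ϱ u := by
  by_contra hneg
  push_neg at hneg
  set S : Set ℝ := {x | 1 ≤ x ∧ ϱ x ≤ 0} with hSdef
  have huS : u ∈ S := by
    constructor
    · by_contra h1
      push_neg at h1
      rw [hϱinit u hu h1.le] at hneg
      linarith
    · exact hneg
  have hbdd : BddBelow S := ⟨1, fun x hx => hx.1⟩
  have hclosed : IsClosed S := by
    have : S = Set.Ici 1 ∩ ϱ ⁻¹' (Set.Iic 0) := by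
      ext x; simp [hSdef, Set.mem_setOf_eq, and_comm]
    rw [this]
    exact ContinuousOn.preimage_isClosed_of_isClosed
      (hϱcont.mono (fun x hx => Set.mem_Ici.mpr (le_trans zero_le_one (Set.mem_Ici.mp hx)))) isClosed_Ici isClosed_Iic
  have hmem : sInf S ∈ S := hclosed.csInf_mem ⟨u, huS⟩ hbdd
  set w := sInf S with hwdef
  have hw1 : 1 ≤ w := hmem.1
  have hww : 1 < w := by
    rcases eq_or_lt_of_le hw1 with h | h
    · exfalso
      have := hmem.2
      rw [← h, hϱinit 1 zero_le_one le_rfl] at this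
      linarith
    · exact h
  have hposIoo : ∀ t ∈ Set.Ioo (w - 1) w, 0 < ϱ t := by
    intro t ht
    rcases le_or_gt t 1 with h1 | h1
    · rw [hϱinit t (by linarith [ht.1]) h1]; norm_num
    · by_contra hc
      push_neg at hc
      have : w ≤ t := csInf_le hbdd ⟨h1.le, hc⟩
      linarith [ht.2]
  have hpos : 0 < ∫ t in (w-1)..w, ϱ t :=
    intervalIntegral.intervalIntegral_pos_of_pos_on
      (dickman_hInt ϱ hϱcont (by linarith) (by linarith)) hposIoo (by linarith)
  rw [← dickman_intg ϱ hϱcont hϱinit hϱeq hw1] at hpos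
  nlinarith [hmem.2]

lemma dickman_anti (ϱ : ℝ → ℝ) (hϱcont : ContinuousOn ϱ (Set.Ici 0))
    (hϱinit : ∀ u : ℝ, 0 ≤ u → u ≤ 1 → ϱ u = 1)
    (hϱeq : ∀ u : ℝ, 1 < u → HasDerivAt ϱ (-ϱ (u - 1) / u) u) :
    AntitoneOn ϱ (Set.Ici 0) := by
  have anti1 : AntitoneOn ϱ (Set.Ici 1) := by
    apply antitoneOn_of_deriv_nonpos (convex_Ici 1)
      (hϱcont.mono (fun x hx => Set.mem_Ici.mpr (le_trans zero_le_one (Set.mem_Ici.mp hx))))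
    · intro x hx
      rw [interior_Ici] at hx
      exact (hϱeq x hx).differentiableAt.differentiableWithinAt
    · intro x hx
      rw [interior_Ici] at hx
      have hx1 : 1 < x := hx
      rw [(hϱeq x hx).deriv]
      apply div_nonpos_of_nonpos_of_nonneg
      · simp only [neg_nonpos]
        exact (dickman_pos ϱ hϱcont hϱinit hϱeq (by linarith : (0:ℝ) ≤ x - 1)).le
      · linarith
  intro x hx y hy hxy
  simp only [Set.mem_Ici] at hx hy
  rcases le_or_gt y 1 with h1 | h1
  · rw [hϱinit x hx (le_trans hxy h1), hϱinit y hy h1]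
  · rcases le_or_gt 1 x with h2 | h2
    · exact anti1 h2 h1.le hxy
    · rw [hϱinit x hx h2.le]
      calc ϱ y ≤ ϱ 1 := anti1 (Set.mem_Ici.mpr (le_refl (1:ℝ))) h1.le h1.le
        _ = 1 := hϱinit 1 zero_le_one le_rfl

lemma dickman_ratio (ϱ : ℝ → ℝ) (hϱcont : ContinuousOn ϱ (Set.Ici 0))
    (hϱinit : ∀ u : ℝ, 0 ≤ u → u ≤ 1 → ϱ u = 1)
    (hϱeq : ∀ u : ℝ, 1 < u → HasDerivAt ϱ (-ϱ (u - 1) / u) u)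
    {u : ℝ} (hu : 1 ≤ u) : ϱ u ≤ ϱ (u - 1) / u := by
  have key : u * ϱ u ≤ ϱ (u - 1) := by
    rw [dickman_intg ϱ hϱcont hϱinit hϱeq hu]
    calc (∫ t in (u-1)..u, ϱ t) ≤ ∫ _ in (u-1)..u, ϱ (u-1) := by
          apply intervalIntegral.integral_mono_on (by linarith)
            (dickman_hInt ϱ hϱcont (by linarith) (by linarith))
            intervalIntegrable_const
          intro x hx
          obtain ⟨hxl, hxr⟩ := Set.mem_Icc.mp hx
          exact dickman_anti ϱ hϱcont hϱinit hϱeq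
            (Set.mem_Ici.mpr (by linarith)) (Set.mem_Ici.mpr (by linarith)) hxl
      _ = ϱ (u - 1) := by simp
  rw [le_div_iff₀ (by linarith : (0:ℝ) < u)]
  linarith

lemma dickman_fact (ϱ : ℝ → ℝ) (hϱcont : ContinuousOn ϱ (Set.Ici 0))
    (hϱinit : ∀ u : ℝ, 0 ≤ u → u ≤ 1 → ϱ u = 1)
    (hϱeq : ∀ u : ℝ, 1 < u → HasDerivAt ϱ (-ϱ (u - 1) / u) u) :
    ∀ (k : ℕ) (u : ℝ), (k : ℝ) ≤ u → ϱ u ≤ ((Nat.factorial k) : ℝ)⁻¹ := by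
  intro k
  induction k with
  | zero =>
    intro u hu
    simp only [Nat.factorial_zero, Nat.cast_one, inv_one]
    have h0 : ϱ u ≤ ϱ 0 :=
      dickman_anti ϱ hϱcont hϱinit hϱeq (Set.mem_Ici.mpr le_rfl)
        (Set.mem_Ici.mpr (by exact_mod_cast hu)) (by exact_mod_cast hu)
    rw [hϱinit 0 le_rfl zero_le_one] at h0
    exact h0
  | succ k ih =>
    intro u hu
    push_cast at hu
    have hu1 : 1 ≤ u := by
      have : (0:ℝ) ≤ k := Nat.cast_nonneg k
      linarith
    have h1 : ϱ u ≤ ϱ (u - 1) / u := dickman_ratio ϱ hϱcont hϱinit hϱeq hu1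
    have h2 : ϱ (u - 1) ≤ ((Nat.factorial k) : ℝ)⁻¹ := ih (u - 1) (by linarith)
    have h3 : ϱ (u - 1) / u ≤ ((Nat.factorial k) : ℝ)⁻¹ / ((k : ℝ) + 1) := by
      apply div_le_div₀ (by positivity) h2 (by positivity) hu
    refine le_trans h1 (le_trans h3 ?_)
    rw [Nat.factorial_succ]
    push_cast
    rw [div_eq_mul_inv, ← mul_inv]
    apply le_of_eq
    ring_nf

lemma fact_lower (K j : ℕ) (hK : 1 ≤ K) (hKj : K ≤ j) :
    (Nat.factorial K : ℝ) * 2^(j - K) ≤ (Nat.factorial j : ℝ) := by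
  have h : Nat.factorial K * 2^(j-K) ≤ Nat.factorial j := by
    calc Nat.factorial K * 2^(j-K) ≤ Nat.factorial K * (K+1)^(j-K) := by
          apply Nat.mul_le_mul_left
          exact Nat.pow_le_pow_left (by omega) _
      _ ≤ Nat.factorial (K + (j - K)) := Nat.factorial_mul_pow_le_factorial
      _ = Nat.factorial j := by congr 1; omega
  exact_mod_cast h

lemma inv_fact_le (K j : ℕ) (hK : 1 ≤ K) (hKj : K ≤ j) :
    ((Nat.factorial j : ℕ) : ℝ)⁻¹ ≤ 2^K / (Nat.factorial K) * ((2:ℝ)^j)⁻¹ := by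
  have h2 : (2:ℝ)^(j-K) * 2^K = 2^j := by
    rw [← pow_add]; congr 1; omega
  have hKpos : (0:ℝ) < Nat.factorial K := by positivity
  have hjpos : (0:ℝ) < Nat.factorial j := by positivity
  have key : (Nat.factorial K : ℝ) * 2^j ≤ (Nat.factorial j : ℝ) * 2^K := by
    calc (Nat.factorial K : ℝ) * 2^j = (Nat.factorial K * 2^(j-K)) * 2^K := by
          rw [mul_assoc, h2]
      _ ≤ _ := mul_le_mul_of_nonneg_right (fact_lower K j hK hKj) (by positivity)
  rw [div_mul_eq_mul_div, le_div_iff₀ hKpos, inv_mul_eq_div, ← div_eq_mul_inv,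
    div_le_div_iff₀ hjpos (by positivity)]
  linarith
lemma pow_div_fact_anti (K j : ℕ) (hK : 1 ≤ K) (hKj : K ≤ j) :
    (2:ℝ)^j / (Nat.factorial j) ≤ 2^K / (Nat.factorial K) := by
  have h := inv_fact_le K j hK hKj
  calc (2:ℝ)^j / (Nat.factorial j) = 2^j * ((Nat.factorial j : ℝ))⁻¹ := by
        rw [div_eq_mul_inv]
    _ ≤ 2^j * (2^K / (Nat.factorial K) * ((2:ℝ)^j)⁻¹) := by
        apply mul_le_mul_of_nonneg_left _ (by positivity)
        exact_mod_cast h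
    _ = 2^K / (Nat.factorial K) := by field_simp

lemma pow_le_two_mul_fact (m : ℕ) : m^m ≤ Nat.factorial (2*m) := by
  calc m^m ≤ (m+1)^m := Nat.pow_le_pow_left (by omega) m
    _ ≤ Nat.factorial m * (m+1)^m := Nat.le_mul_of_pos_left _ (Nat.factorial_pos m)
    _ ≤ Nat.factorial (m + m) := Nat.factorial_mul_pow_le_factorial
    _ = Nat.factorial (2*m) := by congr 1; omega

lemma arith_aux (s q : ℝ) (hs : 8 ≤ s) (hq0 : 0 ≤ q) (hqsq : q^2 = s + 0.7) : 2 ≤ q := by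
  nlinarith

lemma arith_main (L s l T mR K l2 q lm ll : ℝ)
    (hs : 8 ≤ s) (hlu : l ≤ s + 0.7) (hTL : T * l = L)
    (hT2 : 2 ≤ T) (hK1 : K ≤ 2*mR + 1) (hm4T : 4*T ≤ mR) (hm8 : 8 ≤ mR)
    (hl2 : 0.6 ≤ l2) (hl2' : l2 ≤ 0.7) (hKnn : 0 ≤ K)
    (hq0 : 0 ≤ q) (hqsq : q^2 = s + 0.7) (hll : ll ≤ 2*q - 2)
    (hlm : 2*l2 + s - ll ≤ lm) : K * l2 + L ≤ mR * lm := by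
  have hq2 : 2 ≤ q := arith_aux s q hs hq0 hqsq
  set A : ℝ := 2*l2 + s - ll with hAdef
  have hA15 : 1.5 ≤ A := by nlinarith [sq_nonneg (q - 1)]
  have hC : l ≤ 4*(A - 1.5) := by nlinarith
  have hB : 4*T*(A - 1.5) ≤ mR*(lm - 1.5) := by
    apply mul_le_mul hm4T (by linarith) (by linarith) (by linarith)
  have hD : L ≤ 4*T*(A - 1.5) := by nlinarith
  have hE : K * l2 ≤ (2*mR + 1) * 0.7 := by
    apply mul_le_mul hK1 hl2' (by linarith) (by linarith)
  nlinarith [hB, hD, hE]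

lemma core_bound (n K : ℕ) (hs : 8 ≤ Real.log (Real.log n))
    (hK : 9 * Real.log n / Real.log (Real.log (3 * (n:ℝ))) ≤ (K:ℝ) + 1) :
    (2:ℝ)^K * n ≤ (Nat.factorial K : ℝ) := by
  have hL0 : (0:ℝ) ≤ Real.log n := Real.log_natCast_nonneg n
  have hL1 : 1 < Real.log n := by
    by_contra h
    push_neg at h
    have : Real.log (Real.log n) ≤ 0 := Real.log_nonpos hL0 h
    linarith
  have hLexp : Real.exp 8 ≤ Real.log n := (Real.le_log_iff_exp_le (by linarith)).mp hs
  have hexp8 : (100:ℝ) ≤ Real.exp 8 := by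
    have h1 : (2:ℝ) ≤ Real.exp 1 := by
      have := Real.add_one_le_exp (1:ℝ); linarith
    have h2 : Real.exp 1 ^ (8:ℕ) = Real.exp 8 := by
      rw [← Real.exp_nat_mul]; norm_num
    calc (100:ℝ) ≤ 2^(8:ℕ) := by norm_num
      _ ≤ Real.exp 1 ^ (8:ℕ) := by
          apply pow_le_pow_left₀ (by norm_num) h1
      _ = Real.exp 8 := h2
  have hL100 : (100:ℝ) ≤ Real.log n := le_trans hexp8 hLexp
  have hn2 : 2 ≤ n := by
    by_contra h
    push_neg at h
    interval_cases n <;> simp [Real.log_zero, Real.log_one] at hL1 <;> norm_num at hL1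
  have hnR : (0:ℝ) < (n:ℝ) := by positivity
  have hlog3n : Real.log (3 * (n:ℝ)) = Real.log 3 + Real.log n := by
    rw [Real.log_mul (by norm_num) (by positivity)]
  have hlog3 : (0:ℝ) ≤ Real.log 3 := Real.log_nonneg (by norm_num)
  have hlog3' : Real.log 3 ≤ 2 := by
    have := Real.log_le_sub_one_of_pos (show (0:ℝ) < 3 by norm_num); linarith
  have hlog2 : Real.log 2 ≤ 0.7 := by
    have := Real.log_two_lt_d9; linarith
  have hlog2' : (0.6:ℝ) ≤ Real.log 2 := by
    have := Real.log_two_gt_d9; linarith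
  have hls : Real.log (Real.log n) ≤ Real.log (Real.log (3 * (n:ℝ))) := by
    rw [hlog3n]
    exact Real.log_le_log (by linarith) (by linarith)
  have hlu : Real.log (Real.log (3 * (n:ℝ))) ≤ Real.log (Real.log n) + 0.7 := by
    rw [hlog3n]
    calc Real.log (Real.log 3 + Real.log n) ≤ Real.log (2 * Real.log n) := by
          apply Real.log_le_log (by linarith) (by linarith)
      _ = Real.log 2 + Real.log (Real.log n) := by
          rw [Real.log_mul (by norm_num) (by linarith)]
      _ ≤ Real.log (Real.log n) + 0.7 := by linarith
  have hlpos : (0:ℝ) < Real.log (Real.log (3 * (n:ℝ))) := by linarith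
  have hTL : (Real.log n / Real.log (Real.log (3 * (n:ℝ)))) * Real.log (Real.log (3 * (n:ℝ)))
      = Real.log n := by field_simp
  have h9T : 9 * (Real.log n / Real.log (Real.log (3 * (n:ℝ)))) ≤ (K:ℝ) + 1 := by
    rw [show 9 * (Real.log n / Real.log (Real.log (3 * (n:ℝ))))
      = 9 * Real.log n / Real.log (Real.log (3 * (n:ℝ))) by ring]
    exact hK
  have hL2s : 2 * Real.log (Real.log n) + 1.4 ≤ Real.log n := by
    have h1 := Real.add_one_le_exp (Real.log (Real.log n) / 2)
    have h2 : Real.exp (Real.log (Real.log n) / 2) ^ (2:ℕ) = Real.exp (Real.log (Real.log n)) := by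
      rw [← Real.exp_nat_mul]
      congr 1
      push_cast
      ring
    have h3 : (Real.log (Real.log n)/2 + 1)^(2:ℕ) ≤ Real.exp (Real.log (Real.log n)) := by
      rw [← h2]
      apply pow_le_pow_left₀ (by linarith) h1
    rw [Real.exp_log (by linarith)] at h3
    nlinarith [h3, hs]
  have hT2 : 2 ≤ Real.log n / Real.log (Real.log (3 * (n:ℝ))) := by
    rw [le_div_iff₀ hlpos]
    linarith
  set m : ℕ := K / 2 with hmdef
  have hm1 : (K:ℝ) ≤ 2 * m + 1 := by
    have : K ≤ 2 * m + 1 := by omega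
    exact_mod_cast this
  have hm2 : 2 * (m:ℝ) ≤ K := by
    have : 2 * m ≤ K := by omega
    exact_mod_cast this
  have hm4T : 4 * (Real.log n / Real.log (Real.log (3 * (n:ℝ)))) ≤ (m:ℝ) := by linarith
  have hm8 : (8:ℝ) ≤ (m:ℝ) := by linarith
  have hmpos : (0:ℝ) < (m:ℝ) := by linarith
  have hlogT : Real.log (Real.log n / Real.log (Real.log (3 * (n:ℝ))))
      = Real.log (Real.log n) - Real.log (Real.log (Real.log (3 * (n:ℝ)))) :=
    Real.log_div (by linarith) (by linarith)
  have hlog4T : Real.log (4 * (Real.log n / Real.log (Real.log (3 * (n:ℝ)))))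
      = 2 * Real.log 2 + Real.log (Real.log n)
        - Real.log (Real.log (Real.log (3 * (n:ℝ)))) := by
    rw [Real.log_mul (by norm_num) (by linarith), hlogT,
      show (4:ℝ) = 2^(2:ℕ) by norm_num, Real.log_pow]
    push_cast
    ring
  have hll : Real.log (Real.log (Real.log (3 * (n:ℝ))))
      ≤ 2 * Real.sqrt (Real.log (Real.log n) + 0.7) - 2 := by
    have h1 : Real.log (Real.log (Real.log (3 * (n:ℝ))))
        = 2 * Real.log (Real.sqrt (Real.log (Real.log (3 * (n:ℝ))))) := by
      rw [Real.log_sqrt hlpos.le]; ring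
    have h2 := Real.log_le_sub_one_of_pos (Real.sqrt_pos.mpr hlpos)
    have h3 : Real.sqrt (Real.log (Real.log (3 * (n:ℝ))))
        ≤ Real.sqrt (Real.log (Real.log n) + 0.7) := Real.sqrt_le_sqrt (by linarith)
    linarith
  have hlogm : Real.log (4 * (Real.log n / Real.log (Real.log (3 * (n:ℝ))))) ≤ Real.log m :=
    Real.log_le_log (by linarith) hm4T
  have hmain : (K:ℝ) * Real.log 2 + Real.log n ≤ (m:ℝ) * Real.log m := by
    apply arith_main (Real.log n) (Real.log (Real.log n))
      (Real.log (Real.log (3 * (n:ℝ)))) (Real.log n / Real.log (Real.log (3 * (n:ℝ))))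
      (m:ℝ) (K:ℝ) (Real.log 2) (Real.sqrt (Real.log (Real.log n) + 0.7)) (Real.log m)
      (Real.log (Real.log (Real.log (3 * (n:ℝ)))))
      hs hlu hTL hT2 hm1 hm4T hm8 hlog2' hlog2 (by positivity)
      (Real.sqrt_nonneg _) (Real.sq_sqrt (by linarith)) hll
    rw [← hlog4T]
    exact hlogm
  have hfin1 : (2:ℝ)^K * n ≤ (m:ℝ)^(m:ℕ) := by
    rw [← Real.log_le_log_iff (by positivity) (by positivity),
      Real.log_mul (by positivity) (by positivity), Real.log_pow, Real.log_pow]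
    exact hmain
  have hfin2 : ((m:ℝ))^(m:ℕ) ≤ (Nat.factorial K : ℝ) := by
    have h1 : m^m ≤ Nat.factorial (2*m) := pow_le_two_mul_fact m
    have h2 : Nat.factorial (2*m) ≤ Nat.factorial K := Nat.factorial_le (by omega)
    have h3 : (m:ℝ)^(m:ℕ) = ((m^m : ℕ) : ℝ) := by push_cast; ring
    rw [h3]
    exact_mod_cast le_trans h1 h2
  linarith

-- basic facts for n ≥ 3
lemma base_facts (n : ℕ) (hn : 3 ≤ n) :
    (1:ℝ) ≤ Real.log n ∧ (1:ℝ) < Real.log (3 * (n:ℝ)) := by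
  have hnR : (3:ℝ) ≤ (n:ℝ) := by exact_mod_cast hn
  have he : Real.exp 1 < 3 := by
    have := Real.exp_one_lt_d9; linarith
  have h1 : (1:ℝ) ≤ Real.log n := by
    rw [Real.le_log_iff_exp_le (by linarith)]
    linarith
  have h2 : (1:ℝ) < Real.log (3 * (n:ℝ)) := by
    rw [Real.lt_log_iff_exp_lt (by linarith)]
    nlinarith
  exact ⟨h1, h2⟩

lemma Mfun_div (c : ℝ) (n : ℕ) (hn : 3 ≤ n) :
    Mfun c n / n = c * Real.log n / Real.log (Real.log (3 * (n:ℝ))) := by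
  have hnR : (0:ℝ) < (n:ℝ) := by positivity
  have hlpos : 0 < Real.log (Real.log (3 * (n:ℝ))) := Real.log_pos (base_facts n hn).2
  rw [Mfun]
  field_simp

lemma K_ge_one (c : ℝ) (hc : 9 ≤ c) (n : ℕ) (hn : 3 ≤ n) :
    1 ≤ ⌊Mfun c n / n⌋₊ ∧ 0 < Real.log (Real.log (3 * (n:ℝ))) ∧
      0 ≤ Mfun c n / n := by
  obtain ⟨hL1, hl1⟩ := base_facts n hn
  have hlpos : 0 < Real.log (Real.log (3 * (n:ℝ))) := Real.log_pos hl1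
  have hnR : (3:ℝ) ≤ (n:ℝ) := by exact_mod_cast hn
  have hlup : Real.log (Real.log (3 * (n:ℝ))) ≤ 9 * Real.log n := by
    have h1 : Real.log (3 * (n:ℝ)) ≤ 3 * (n:ℝ) - 1 :=
      Real.log_le_sub_one_of_pos (by linarith)
    have h2 : Real.log (Real.log (3 * (n:ℝ))) ≤ Real.log (3 * (n:ℝ)) - 1 :=
      Real.log_le_sub_one_of_pos (by linarith)
    have h3 : Real.log (3 * (n:ℝ)) = Real.log 3 + Real.log n := by
      rw [Real.log_mul (by norm_num) (by positivity)]
    have h4 : Real.log 3 ≤ 2 := by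
      have := Real.log_le_sub_one_of_pos (show (0:ℝ) < 3 by norm_num); linarith
    linarith
  have hMn : 1 ≤ Mfun c n / n := by
    rw [Mfun_div c n hn, le_div_iff₀ hlpos]
    nlinarith
  refine ⟨Nat.le_floor ?_, hlpos, by linarith⟩
  exact_mod_cast hMn

lemma tail_bound (ϱ : ℝ → ℝ) (hϱcont : ContinuousOn ϱ (Set.Ici 0))
    (hϱinit : ∀ u : ℝ, 0 ≤ u → u ≤ 1 → ϱ u = 1)
    (hϱeq : ∀ u : ℝ, 1 < u → HasDerivAt ϱ (-ϱ (u - 1) / u) u)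
    (c : ℝ) (hc : 9 ≤ c) (n : ℕ) (hn : 3 ≤ n) :
    (∑' m : ℕ, if Mfun c n < (m : ℝ) then ϱ (m / n) else 0) ≤
      12 * n * ((2:ℝ)^(⌊Mfun c n / n⌋₊) / (Nat.factorial ⌊Mfun c n / n⌋₊)) := by
  obtain ⟨hK1, hlpos, hMn0⟩ := K_ge_one c hc n hn
  set K : ℕ := ⌊Mfun c n / n⌋₊ with hKdef
  have hnR : (3:ℝ) ≤ (n:ℝ) := by exact_mod_cast hn
  have hn0 : (0:ℝ) < (n:ℝ) := by linarith
  set r : ℝ := (2:ℝ) ^ (-(1:ℝ)/(n:ℝ)) with hrdef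
  have hr0 : 0 < r := Real.rpow_pos_of_pos (by norm_num) _
  have hr1 : r < 1 := by
    apply Real.rpow_lt_one_of_one_lt_of_neg (by norm_num)
    rw [neg_div]
    simp only [Left.neg_neg_iff]
    positivity
  have hrm : ∀ m : ℕ, r ^ m = (2:ℝ) ^ (-((m:ℝ)/(n:ℝ))) := by
    intro m
    rw [hrdef, ← Real.rpow_natCast ((2:ℝ) ^ (-(1:ℝ)/(n:ℝ))) m, ← Real.rpow_mul (by norm_num)]
    congr 1
    ring
  set B : ℝ := 2^K / (Nat.factorial K) with hBdef
  have hB0 : 0 < B := by positivity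
  have hg : Summable (fun m : ℕ => 4 * B * r ^ m) :=
    (summable_geometric_of_lt_one hr0.le hr1).mul_left _
  have hterm : ∀ m : ℕ,
      (if Mfun c n < (m : ℝ) then ϱ (m / n) else 0) ≤ 4 * B * r ^ m := by
    intro m
    by_cases hm : Mfun c n < (m : ℝ)
    · rw [if_pos hm]
      have hu0 : (0:ℝ) ≤ (m:ℝ)/(n:ℝ) := by positivity
      set u : ℝ := (m:ℝ)/(n:ℝ) with hudef
      have hKu : (K:ℝ) ≤ u := by
        calc (K:ℝ) ≤ Mfun c n / n := Nat.floor_le hMn0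
          _ ≤ u := by
              rw [hudef]
              gcongr
      have hKj : K ≤ ⌊u⌋₊ := Nat.le_floor (by
        calc (K:ℝ) = ((K:ℕ):ℝ) := rfl
          _ ≤ u := hKu)
      have h1 : ϱ u ≤ ((Nat.factorial ⌊u⌋₊ : ℕ) : ℝ)⁻¹ :=
        dickman_fact ϱ hϱcont hϱinit hϱeq ⌊u⌋₊ u (Nat.floor_le hu0)
      have h2 : ((Nat.factorial ⌊u⌋₊ : ℕ) : ℝ)⁻¹ ≤ B * ((2:ℝ)^(⌊u⌋₊))⁻¹ :=
        inv_fact_le K ⌊u⌋₊ hK1 hKj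
      have h3 : ((2:ℝ)^(⌊u⌋₊))⁻¹ ≤ 2 * r ^ m := by
        have hj : u - 1 ≤ (⌊u⌋₊ : ℝ) := by
          have := Nat.lt_floor_add_one u
          linarith
        have e1 : ((2:ℝ)^(⌊u⌋₊ : ℕ))⁻¹ = (2:ℝ) ^ (-(⌊u⌋₊ : ℝ)) := by
          rw [← Real.rpow_natCast 2 ⌊u⌋₊, ← Real.rpow_neg (by norm_num)]
        rw [e1, hrm m]
        have e2 : (2:ℝ) ^ (-(⌊u⌋₊ : ℝ)) ≤ (2:ℝ) ^ (1 - u) := by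
          apply Real.rpow_le_rpow_of_exponent_le (by norm_num)
          linarith
        calc (2:ℝ) ^ (-(⌊u⌋₊ : ℝ)) ≤ (2:ℝ) ^ (1 - u) := e2
          _ = 2 * (2:ℝ) ^ (-u) := by
              rw [show (1:ℝ) - u = 1 + (-u) by ring, Real.rpow_add (by norm_num),
                Real.rpow_one]
          _ = 2 * (2:ℝ) ^ (-((m:ℝ)/(n:ℝ))) := by rw [hudef]
      calc ϱ u ≤ ((Nat.factorial ⌊u⌋₊ : ℕ) : ℝ)⁻¹ := h1
        _ ≤ B * ((2:ℝ)^(⌊u⌋₊))⁻¹ := h2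
        _ ≤ B * (2 * r ^ m) := by
            apply mul_le_mul_of_nonneg_left h3 hB0.le
        _ ≤ 4 * B * r ^ m := by
            have : 0 ≤ r ^ m := by positivity
            nlinarith
    · rw [if_neg hm]
      positivity
  have hf : Summable (fun m : ℕ => if Mfun c n < (m : ℝ) then ϱ (m / n) else 0) := by
    apply Summable.of_nonneg_of_le _ hterm hg
    intro m
    by_cases hm : Mfun c n < (m : ℝ)
    · rw [if_pos hm]
      exact (dickman_pos ϱ hϱcont hϱinit hϱeq (by positivity)).le
    · rw [if_neg hm]
  have hsum : (∑' m : ℕ, if Mfun c n < (m : ℝ) then ϱ (m / n) else 0) ≤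
      ∑' m : ℕ, 4 * B * r ^ m := Summable.tsum_le_tsum hterm hf hg
  have hgeo : (∑' m : ℕ, 4 * B * r ^ m) = 4 * B * (1 - r)⁻¹ := by
    rw [tsum_mul_left, tsum_geometric_of_lt_one hr0.le hr1]
  have hinv : (1 - r)⁻¹ ≤ 3 * n := by
    have hlog2 : Real.log 2 ≤ 0.7 := by
      have := Real.log_two_lt_d9; linarith
    have hlog2' : (0.6:ℝ) ≤ Real.log 2 := by
      have := Real.log_two_gt_d9; linarith
    set y : ℝ := Real.log 2 / n with hydef
    have hy0 : 0 < y := by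
      rw [hydef]; positivity
    have hy14 : y ≤ 0.25 := by
      rw [hydef, div_le_iff₀ hn0]
      nlinarith
    have hrexp : r = Real.exp (-y) := by
      rw [hrdef, Real.rpow_def_of_pos (by norm_num), hydef]
      congr 1
      ring
    have hexpy : 1 + y ≤ Real.exp y := by linarith [Real.add_one_le_exp y]
    have hrey : r ≤ (1 + y)⁻¹ := by
      rw [hrexp, Real.exp_neg]
      apply inv_anti₀ (by linarith) hexpy
    have h1r : 1/(3*(n:ℝ)) ≤ 1 - r := by
      have h5 : 1 - (1+y)⁻¹ = y / (1+y) := by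
        field_simp
        ring
      have hyn : y * (n:ℝ) = Real.log 2 := by
        rw [hydef]; field_simp
      have h67 : 1/(3*(n:ℝ)) ≤ y/(1+y) := by
        rw [div_le_div_iff₀ (by positivity) (by linarith)]
        nlinarith [hyn]
      linarith [hrey, h5, h67]
    calc (1 - r)⁻¹ ≤ (1/(3*(n:ℝ)))⁻¹ := by
          apply inv_anti₀ (by positivity) h1r
      _ = 3 * n := by field_simp
  calc (∑' m : ℕ, if Mfun c n < (m : ℝ) then ϱ (m / n) else 0)
      ≤ 4 * B * (1 - r)⁻¹ := by rw [← hgeo]; exact hsum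
    _ ≤ 4 * B * (3 * n) := by
        apply mul_le_mul_of_nonneg_left hinv (by positivity)
    _ = 12 * n * B := by ring

theorem tail_dickman_sum_bound
    (ϱ : ℝ → ℝ) (hϱcont : ContinuousOn ϱ (Set.Ici 0))
    (hϱinit : ∀ u : ℝ, 0 ≤ u → u ≤ 1 → ϱ u = 1)
    (hϱeq : ∀ u : ℝ, 1 < u → HasDerivAt ϱ (-ϱ (u - 1) / u) u) :
    ∃ c₀ > (0 : ℝ), ∀ c ≥ c₀, ∃ C : ℝ, ∀ n : ℕ, 3 ≤ n →
      (1 / n : ℝ) * (∑' m : ℕ, if Mfun c n < (m : ℝ) then ϱ (m / n) else 0) ≤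
        C / n := by
  refine ⟨9, by norm_num, ?_⟩
  intro c hc
  set K9 : ℕ → ℕ := fun n => ⌊Mfun 9 n / n⌋₊ with hK9def
  set f : ℕ → ℝ := fun n => 12 * n * ((2:ℝ)^(K9 n) / (Nat.factorial (K9 n))) with hfdef
  have hf0 : ∀ n : ℕ, 0 ≤ f n := by
    intro n
    rw [hfdef]
    positivity
  -- the sum is bounded by f n for every n ≥ 3
  have hSf : ∀ n : ℕ, 3 ≤ n →
      (∑' m : ℕ, if Mfun c n < (m : ℝ) then ϱ (m / n) else 0) ≤ f n := by
    intro n hn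
    obtain ⟨hK91, hlpos, _⟩ := K_ge_one 9 le_rfl n hn
    have hL1 : (1:ℝ) ≤ Real.log n := (base_facts n hn).1
    have hKK : K9 n ≤ ⌊Mfun c n / n⌋₊ := by
      apply Nat.floor_le_floor
      rw [Mfun_div 9 n hn, Mfun_div c n hn]
      gcongr
      all_goals linarith
    calc (∑' m : ℕ, if Mfun c n < (m : ℝ) then ϱ (m / n) else 0)
        ≤ 12 * n * ((2:ℝ)^(⌊Mfun c n / n⌋₊) / (Nat.factorial ⌊Mfun c n / n⌋₊)) :=
          tail_bound ϱ hϱcont hϱinit hϱeq c hc n hn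
      _ ≤ 12 * n * ((2:ℝ)^(K9 n) / (Nat.factorial (K9 n))) := by
          apply mul_le_mul_of_nonneg_left (pow_div_fact_anti _ _ hK91 hKK) (by positivity)
      _ = f n := rfl
  -- eventually f n ≤ 12
  have ht : Tendsto (fun n : ℕ => Real.log (Real.log n)) atTop atTop :=
    Real.tendsto_log_atTop.comp (Real.tendsto_log_atTop.comp tendsto_natCast_atTop_atTop)
  obtain ⟨N, hN⟩ := eventually_atTop.mp (ht.eventually_ge_atTop 8)
  have hflarge : ∀ n : ℕ, 3 ≤ n → N ≤ n → f n ≤ 12 := by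
    intro n hn3 hnN
    have hn0 : (0:ℝ) < (n:ℝ) := by
      have : (3:ℝ) ≤ (n:ℝ) := by exact_mod_cast hn3
      linarith
    have hcore : (2:ℝ)^(K9 n) * n ≤ (Nat.factorial (K9 n) : ℝ) := by
      apply core_bound n (K9 n) (hN n hnN)
      have h1 : Mfun 9 n / n < (K9 n : ℝ) + 1 := by
        have := Nat.lt_floor_add_one (Mfun 9 n / n)
        exact_mod_cast this
      rw [Mfun_div 9 n hn3] at h1
      exact h1.le
    have hfac : (0:ℝ) < (Nat.factorial (K9 n) : ℝ) := by positivity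
    have h2 : (2:ℝ)^(K9 n) / (Nat.factorial (K9 n)) ≤ 1 / n := by
      rw [div_le_div_iff₀ hfac hn0]
      linarith
    calc f n ≤ 12 * n * (1 / n) := by
          apply mul_le_mul_of_nonneg_left h2 (by positivity)
      _ = 12 := by field_simp
  set M : ℕ := max N 3 with hMdef
  refine ⟨12 + ∑ i ∈ Finset.range M, max (f i) 0, ?_⟩
  intro n hn
  have hn0 : (0:ℝ) < (n:ℝ) := by
    have : (3:ℝ) ≤ (n:ℝ) := by exact_mod_cast hn
    linarith
  have hsum0 : 0 ≤ ∑ i ∈ Finset.range M, max (f i) 0 :=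
    Finset.sum_nonneg (fun i _ => le_max_right _ _)
  have hfC : f n ≤ 12 + ∑ i ∈ Finset.range M, max (f i) 0 := by
    rcases le_or_gt M n with h | h
    · have := hflarge n hn (le_trans (le_max_left N 3) h)
      linarith
    · have h1 : f n ≤ max (f n) 0 := le_max_left _ _
      have h2 : max (f n) 0 ≤ ∑ i ∈ Finset.range M, max (f i) 0 :=
        Finset.single_le_sum (f := fun i => max (f i) 0)
          (fun i _ => le_max_right _ _) (Finset.mem_range.mpr h)
      linarith
  have hS := le_trans (hSf n hn) hfC
  rw [one_div, inv_mul_eq_div]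
  gcongr
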